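/- Let m, n ≥ 2 and let v be a non-corner vertex of the grid graph G(m,n) (i.e., v is not one of (0,0), (0,n−1), (m−1,0), (m−1,n−1)). If p1 and p2 are two distinct vertices both adjacent to v, then there exists a vertex w adjacent to v with w ≠ p1, w ≠ p2, and w adjacent to neither p1 nor p2. Hence if the resource is at a non-corner vertex with both robots adjacent to it, it has an adjacent empty vertex that neither robot can reach in one move. -/

import Mathlib

/-- The grid graph `G(m,n)` on `Fin m × Fin n`: two vertices are adjacent iff their
ℓ1 distance (coordinates viewed as integers) equals 1. -/
def gridGraph (m n : ℕ) : SimpleGraph (Fin m × Fin n) where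
  Adj u v := |(u.1 : ℤ) - (v.1 : ℤ)| + |(u.2 : ℤ) - (v.2 : ℤ)| = 1
  symm := by
    constructor
    intro u v h
    simpa [abs_sub_comm] using h
  loopless := by
    constructor
    intro u h
    simp at h

/-- Natural-number adjacency relation: `(a,b)` and `(c,d)` at ℓ1 distance 1. -/
def natAdj (a b c d : ℕ) : Prop :=
  (a = c + 1 ∧ b = d) ∨ (c = a + 1 ∧ b = d) ∨ (a = c ∧ b = d + 1) ∨ (a = c ∧ d = b + 1)

lemma gridGraph_adj_mk_iff {m n : ℕ} {a b c d : ℕ} {ha : a < m} {hb : b < n}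
    {hc : c < m} {hd : d < n} :
    (gridGraph m n).Adj (⟨a, ha⟩, ⟨b, hb⟩) (⟨c, hc⟩, ⟨d, hd⟩) ↔ natAdj a b c d := by
  show |(a : ℤ) - (c : ℤ)| + |(b : ℤ) - (d : ℤ)| = 1 ↔ _
  unfold natAdj
  rcases abs_cases ((a : ℤ) - (c : ℤ)) with ⟨e1, _⟩ | ⟨e1, _⟩ <;>
    rcases abs_cases ((b : ℤ) - (d : ℤ)) with ⟨e2, _⟩ | ⟨e2, _⟩ <;>
      rw [e1, e2] <;> omega

/-- Pure arithmetic core of the escape claim. -/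
lemma escape_core (m n a b c1 d1 c2 d2 : ℕ) (hm : 2 ≤ m) (hn : 2 ≤ n)
    (ha : a < m) (hb : b < n)
    (hc1 : c1 < m) (hd1 : d1 < n) (hc2 : c2 < m) (hd2 : d2 < n)
    (hv1 : ¬(a = 0 ∧ b = 0)) (hv2 : ¬(a = 0 ∧ b = n - 1))
    (hv3 : ¬(a = m - 1 ∧ b = 0)) (hv4 : ¬(a = m - 1 ∧ b = n - 1))
    (h1 : natAdj a b c1 d1) (h2 : natAdj a b c2 d2)
    (hne : ¬(c1 = c2 ∧ d1 = d2)) :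
    ∃ e f : ℕ, e < m ∧ f < n ∧ natAdj a b e f ∧ ¬(e = c1 ∧ f = d1) ∧
      ¬(e = c2 ∧ f = d2) ∧ ¬natAdj e f c1 d1 ∧ ¬natAdj e f c2 d2 := by
  unfold natAdj at *
  rw [not_and_or] at hv1 hv2 hv3 hv4 hne
  by_cases k1 : 1 ≤ a ∧ ¬(a - 1 = c1 ∧ b = d1) ∧ ¬(a - 1 = c2 ∧ b = d2)
  · obtain ⟨hk, hp1, hp2⟩ := k1
    rw [not_and_or] at hp1 hp2
    exact ⟨a - 1, b, by omega, hb, by omega, by omega, by omega, by omega, by omega⟩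
  by_cases k2 : a + 1 ≤ m - 1 ∧ ¬(a + 1 = c1 ∧ b = d1) ∧ ¬(a + 1 = c2 ∧ b = d2)
  · obtain ⟨hk, hp1, hp2⟩ := k2
    rw [not_and_or] at hp1 hp2
    exact ⟨a + 1, b, by omega, hb, by omega, by omega, by omega, by omega, by omega⟩
  by_cases k3 : 1 ≤ b ∧ ¬(a = c1 ∧ b - 1 = d1) ∧ ¬(a = c2 ∧ b - 1 = d2)
  · obtain ⟨hk, hp1, hp2⟩ := k3
    rw [not_and_or] at hp1 hp2
    exact ⟨a, b - 1, ha, by omega, by omega, by omega, by omega, by omega, by omega⟩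
  · replace k1 : a = 0 ∨ (a - 1 = c1 ∧ b = d1) ∨ (a - 1 = c2 ∧ b = d2) := by
      by_cases e1 : a - 1 = c1 ∧ b = d1
      · exact Or.inr (Or.inl e1)
      by_cases e2 : a - 1 = c2 ∧ b = d2
      · exact Or.inr (Or.inr e2)
      by_cases e0 : a = 0
      · exact Or.inl e0
      · exact absurd ⟨by omega, e1, e2⟩ k1
    replace k2 : m - 1 ≤ a ∨ (a + 1 = c1 ∧ b = d1) ∨ (a + 1 = c2 ∧ b = d2) := by
      by_cases e1 : a + 1 = c1 ∧ b = d1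
      · exact Or.inr (Or.inl e1)
      by_cases e2 : a + 1 = c2 ∧ b = d2
      · exact Or.inr (Or.inr e2)
      by_cases e0 : m - 1 ≤ a
      · exact Or.inl e0
      · exact absurd ⟨by omega, e1, e2⟩ k2
    replace k3 : b = 0 ∨ (a = c1 ∧ b - 1 = d1) ∨ (a = c2 ∧ b - 1 = d2) := by
      by_cases e1 : a = c1 ∧ b - 1 = d1
      · exact Or.inr (Or.inl e1)
      by_cases e2 : a = c2 ∧ b - 1 = d2
      · exact Or.inr (Or.inr e2)
      by_cases e0 : b = 0
      · exact Or.inl e0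
      · exact absurd ⟨by omega, e1, e2⟩ k3
    exact ⟨a, b + 1, ha, by omega, by omega, by omega, by omega, by omega, by omega⟩

/-- Escape claim for a non-corner vertex: if `v` is not one of the four corner
vertices and `p1 ≠ p2` are both adjacent to `v`, then `v` has a neighbor `w`
distinct from `p1, p2` and adjacent to neither of them. -/
theorem noncorner_escape (m n : ℕ) (hm : 2 ≤ m) (hn : 2 ≤ n)
    (v p1 p2 : Fin m × Fin n)
    (hv1 : v ≠ (⟨0, by omega⟩, ⟨0, by omega⟩))
    (hv2 : v ≠ (⟨0, by omega⟩, ⟨n - 1, by omega⟩))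
    (hv3 : v ≠ (⟨m - 1, by omega⟩, ⟨0, by omega⟩))
    (hv4 : v ≠ (⟨m - 1, by omega⟩, ⟨n - 1, by omega⟩))
    (h1 : (gridGraph m n).Adj v p1) (h2 : (gridGraph m n).Adj v p2)
    (hne : p1 ≠ p2) :
    ∃ w : Fin m × Fin n, (gridGraph m n).Adj v w ∧ w ≠ p1 ∧ w ≠ p2 ∧
      ¬(gridGraph m n).Adj w p1 ∧ ¬(gridGraph m n).Adj w p2 := by
  obtain ⟨⟨a, ha⟩, ⟨b, hb⟩⟩ := v
  obtain ⟨⟨c1, hc1⟩, ⟨d1, hd1⟩⟩ := p1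
  obtain ⟨⟨c2, hc2⟩, ⟨d2, hd2⟩⟩ := p2
  rw [gridGraph_adj_mk_iff] at h1 h2
  simp only [ne_eq, Prod.mk.injEq, Fin.mk.injEq, not_and] at hv1 hv2 hv3 hv4 hne
  obtain ⟨e, f, he, hf, hadj, hne1, hne2, hna1, hna2⟩ :=
    escape_core m n a b c1 d1 c2 d2 hm hn ha hb hc1 hd1 hc2 hd2
      (fun h => hv1 h.1 h.2) (fun h => hv2 h.1 h.2) (fun h => hv3 h.1 h.2)
      (fun h => hv4 h.1 h.2) h1 h2 (fun h => hne h.1 h.2)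
  refine ⟨(⟨e, he⟩, ⟨f, hf⟩), ?_, ?_, ?_, ?_, ?_⟩
  · exact gridGraph_adj_mk_iff.mpr hadj
  · simp only [ne_eq, Prod.mk.injEq, Fin.mk.injEq, not_and]
    exact fun h h' => hne1 ⟨h, h'⟩
  · simp only [ne_eq, Prod.mk.injEq, Fin.mk.injEq, not_and]
    exact fun h h' => hne2 ⟨h, h'⟩
  · exact fun h => hna1 (gridGraph_adj_mk_iff.mp h)
  · exact fun h => hna2 (gridGraph_adj_mk_iff.mp h)
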